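/- The monoid of Gelfand–Tsetlin patterns has the integer decomposition property: every integral GT-pattern u at level r ≥ 1 is a sum of r integral GT-patterns at level 1. Specifically, if u is a GT-pattern at level r ≥ 1 and u' is the 0/1-valued GT-pattern at level 1 whose support equals the support of u, then u − u' is a GT-pattern at level r−1. -/

import Mathlib

/-- A Gelfand–Tsetlin pattern at level `r` on the `k × m` grid:  an integer array `u`
(indexed by `ℕ × ℕ`, only the values on `{1,…,k} × {1,…,m}` are relevant) with
`u₁₁ ≥ 0`, `u_{k m} ≤ r`, `u_{ij} ≥ u_{(i−1)j}` for `i ≥ 2` and `u_{ij} ≥ u_{i(j−1)}`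
for `j ≥ 2`. -/
def IsGTPattern (k m : ℕ) (r : ℤ) (u : ℕ → ℕ → ℤ) : Prop :=
  0 ≤ u 1 1 ∧ u k m ≤ r ∧
    (∀ i j, 2 ≤ i → i ≤ k → 1 ≤ j → j ≤ m → u (i - 1) j ≤ u i j) ∧
    (∀ i j, 1 ≤ i → i ≤ k → 2 ≤ j → j ≤ m → u i (j - 1) ≤ u i j)

/-- The `0/1`-valued indicator pattern of the support of `u`. -/
def supportPattern (u : ℕ → ℕ → ℤ) : ℕ → ℕ → ℤ :=
  fun i j => if 0 < u i j then 1 else 0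

/-- Peeling off the support pattern, iterated. -/
def peelGT (u : ℕ → ℕ → ℤ) : ℕ → ℕ → ℕ → ℤ
  | 0 => u
  | t + 1 => fun i j => peelGT u t i j - supportPattern (peelGT u t) i j

lemma gt_step (k m : ℕ) (r : ℤ) (hr : 1 ≤ r) (u : ℕ → ℕ → ℤ)
    (hu : IsGTPattern k m r u) :
    IsGTPattern k m 1 (supportPattern u) ∧
      IsGTPattern k m (r - 1) (fun i j => u i j - supportPattern u i j) := by
  obtain ⟨h1, h2, h3, h4⟩ := hu
  refine ⟨⟨?_, ?_, ?_, ?_⟩, ?_, ?_, ?_, ?_⟩ <;> simp only [supportPattern]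
  · split_ifs <;> omega
  · split_ifs <;> omega
  · intro i j hi hik hj hjm
    have hle := h3 i j hi hik hj hjm
    split_ifs <;> omega
  · intro i j hi hik hj hjm
    have hle := h4 i j hi hik hj hjm
    split_ifs <;> omega
  · split_ifs <;> omega
  · split_ifs <;> omega
  · intro i j hi hik hj hjm
    have hle := h3 i j hi hik hj hjm
    split_ifs <;> omega
  · intro i j hi hik hj hjm
    have hle := h4 i j hi hik hj hjm
    split_ifs <;> omega

lemma gt_row_mono (k m : ℕ) (u : ℕ → ℕ → ℤ)
    (h3 : ∀ i j, 2 ≤ i → i ≤ k → 1 ≤ j → j ≤ m → u (i - 1) j ≤ u i j)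
    (j : ℕ) (hj : 1 ≤ j) (hjm : j ≤ m) :
    ∀ i i', 1 ≤ i → i ≤ i' → i' ≤ k → u i j ≤ u i' j := by
  intro i i' hi hii' hi'k
  induction i' , hii' using Nat.le_induction with
  | base => exact le_rfl
  | succ n hn ih =>
    have h := h3 (n + 1) j (by omega) hi'k hj hjm
    simp only [Nat.add_sub_cancel] at h
    exact le_trans (ih (by omega)) h

lemma gt_col_mono (k m : ℕ) (u : ℕ → ℕ → ℤ)
    (h4 : ∀ i j, 1 ≤ i → i ≤ k → 2 ≤ j → j ≤ m → u i (j - 1) ≤ u i j)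
    (i : ℕ) (hi : 1 ≤ i) (hik : i ≤ k) :
    ∀ j j', 1 ≤ j → j ≤ j' → j' ≤ m → u i j ≤ u i j' := by
  intro j j' hj hjj' hj'm
  induction j' , hjj' using Nat.le_induction with
  | base => exact le_rfl
  | succ n hn ih =>
    have h := h4 i (n + 1) hi hik (by omega) hj'm
    simp only [Nat.add_sub_cancel] at h
    exact le_trans (ih (by omega)) h

lemma gt_level_zero (k m : ℕ) (hk : 1 ≤ k) (hm : 1 ≤ m) (u : ℕ → ℕ → ℤ)
    (hu : IsGTPattern k m 0 u) :
    ∀ i j, 1 ≤ i → i ≤ k → 1 ≤ j → j ≤ m → u i j = 0 := by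
  obtain ⟨h1, h2, h3, h4⟩ := hu
  intro i j hi hik hj hjm
  have hlow : u 1 1 ≤ u i j :=
    le_trans (gt_row_mono k m u h3 1 le_rfl hm 1 i le_rfl hi hik)
      (gt_col_mono k m u h4 i hi hik 1 j le_rfl hj hjm)
  have hhigh : u i j ≤ u k m :=
    le_trans (gt_col_mono k m u h4 i hi hik j m hj hjm le_rfl)
      (gt_row_mono k m u h3 m hm le_rfl i k hi hik le_rfl)
  omega

lemma gt_peel (k m : ℕ) (r : ℤ) (u : ℕ → ℕ → ℤ) (hu : IsGTPattern k m r u) :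
    ∀ t : ℕ, (t : ℤ) ≤ r → IsGTPattern k m (r - t) (peelGT u t) := by
  intro t
  induction t with
  | zero => intro _; simpa [peelGT] using hu
  | succ n ih =>
    intro ht
    have hn : (n : ℤ) ≤ r := by push_cast at ht ⊢; omega
    have hrn : 1 ≤ r - n := by push_cast at ht; omega
    have := (gt_step k m (r - n) hrn (peelGT u n) (ih hn)).2
    have heq : r - (n : ℤ) - 1 = r - ((n : ℕ) + 1 : ℕ) := by push_cast; ring
    rw [heq] at this
    exact this

lemma gt_peel_sum (u : ℕ → ℕ → ℤ) (i j : ℕ) :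
    ∀ t : ℕ, peelGT u t i j =
      u i j - ∑ s ∈ Finset.range t, supportPattern (peelGT u s) i j := by
  intro t
  induction t with
  | zero => simp [peelGT]
  | succ n ih =>
    simp only [peelGT, Finset.sum_range_succ, ih]
    ring

theorem gtPattern_integer_decomposition
    (k m : ℕ) (hk : 1 ≤ k) (hm : 1 ≤ m) (r : ℤ) (hr : 1 ≤ r)
    (u : ℕ → ℕ → ℤ) (hu : IsGTPattern k m r u) :
    IsGTPattern k m 1 (supportPattern u) ∧
      IsGTPattern k m (r - 1) (fun i j => u i j - supportPattern u i j) ∧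
      ∃ w : ℕ → ℕ → ℕ → ℤ,
        (∀ t, t < r.toNat → IsGTPattern k m 1 (w t)) ∧
        (∀ i j, 1 ≤ i → i ≤ k → 1 ≤ j → j ≤ m →
          u i j = ∑ t ∈ Finset.range r.toNat, w t i j) := by
  obtain ⟨hA, hB⟩ := gt_step k m r hr u hu
  refine ⟨hA, hB, fun t => supportPattern (peelGT u t), ?_, ?_⟩
  · intro t ht
    have htr : (t : ℤ) ≤ r := by
      have := Int.toNat_of_nonneg (le_trans zero_le_one hr)
      omega
    have h1 : 1 ≤ r - t := by
      have := Int.toNat_of_nonneg (le_trans zero_le_one hr)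
      omega
    exact (gt_step k m (r - t) h1 (peelGT u t) (gt_peel k m r u hu t htr)).1
  · intro i j hi hik hj hjm
    have hrN : ((r.toNat : ℤ)) = r := Int.toNat_of_nonneg (le_trans zero_le_one hr)
    have hlvl : IsGTPattern k m 0 (peelGT u r.toNat) := by
      have := gt_peel k m r u hu r.toNat (by omega)
      rwa [hrN, sub_self] at this
    have hz := gt_level_zero k m hk hm _ hlvl i j hi hik hj hjm
    have hs := gt_peel_sum u i j r.toNat
    show u i j = ∑ t ∈ Finset.range r.toNat, supportPattern (peelGT u t) i j
    omega
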